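/- The value 0 does not belong to the set of critical values c₁({x : P(x) = 0}) of c₁, but 0 belongs to its closure; in particular, the set of critical values of c₁ is not closed in ℝ. -/
import Mathlib


open Filter MeasureTheory

/-- With `P` and `c₁` as before, `0` does not belong to the set of critical
values `c₁({x | P(x) = 0})` of `c₁`, but `0` belongs to its closure; in particular, the set
of critical values of `c₁` is not closed in `ℝ`. -/
theorem stmt11 (P : ℝ → ℝ) (hP : AnalyticOnNhd ℝ P Set.univ)
    (hP0 : ∀ x : ℝ, 0 ≤ P x) (hPne : ∃ x : ℝ, P x ≠ 0)
    (hzero : ¬ BddBelow {x : ℝ | P x = 0})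
    (hInt : Integrable (fun t : ℝ => Real.exp (-t ^ 2) * P t))
    (I : ℝ) (hI : I = ∫ t : ℝ, Real.exp (-t ^ 2) * P t)
    (c₁ : ℝ → ℝ) (hc₁ : ∀ x : ℝ, c₁ x = -∫ t in Set.Iic x, Real.exp (-t ^ 2) * P t) :
    0 ∉ c₁ '' {x : ℝ | P x = 0} ∧ (0 : ℝ) ∈ closure (c₁ '' {x : ℝ | P x = 0}) ∧
      ¬ IsClosed (c₁ '' {x : ℝ | P x = 0}) := by
  set f : ℝ → ℝ := fun t => Real.exp (-t ^ 2) * P t with hf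
  have hfnn : ∀ t, 0 ≤ f t := fun t => mul_nonneg (Real.exp_pos _).le (hP0 t)
  -- positivity of the integral over any Iic x
  have hpos : ∀ x : ℝ, 0 < ∫ t in Set.Iic x, f t := by
    intro x
    rw [setIntegral_pos_iff_support_of_nonneg_ae
      (Filter.Eventually.of_forall hfnn) hInt.integrableOn]
    by_contra h
    push_neg at h
    have hnull : MeasureTheory.volume (Function.support f ∩ Set.Iic x) = 0 := le_antisymm h bot_le
    -- show P vanishes frequently near x - 1
    have hfreq : ∃ᶠ z in nhdsWithin (x - 1) {(x-1)}ᶜ, P z = 0 := by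
      by_contra hnot
      rw [Filter.not_frequently] at hnot
      rw [eventually_nhdsWithin_iff] at hnot
      rw [Metric.eventually_nhds_iff] at hnot
      obtain ⟨ε, hε, hball⟩ := hnot
      set δ := min ε 1 with hδ
      have hδpos : 0 < δ := lt_min hε one_pos
      have hsub : Set.Ioo (x - 1) (x - 1 + δ) ⊆ Function.support f ∩ Set.Iic x := by
        intro y hy
        have hy1 : y ≠ x - 1 := ne_of_gt hy.1
        have hdist : dist y (x - 1) < ε := by
          rw [Real.dist_eq, abs_of_pos (sub_pos.mpr hy.1)]
          have := hy.2
          have : y - (x - 1) < δ := by linarith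
          exact lt_of_lt_of_le this (min_le_left _ _)
        have hPy : P y ≠ 0 := hball hdist (Set.mem_compl_singleton_iff.mpr hy1)
        constructor
        · simp only [Function.mem_support, hf]
          exact mul_ne_zero (Real.exp_ne_zero _) hPy
        · have hδ1 : δ ≤ 1 := min_le_right _ _
          have := hy.2
          simp only [Set.mem_Iic]
          linarith
      have hle : MeasureTheory.volume (Set.Ioo (x - 1) (x - 1 + δ))
          ≤ MeasureTheory.volume (Function.support f ∩ Set.Iic x) := measure_mono hsub
      rw [hnull, Real.volume_Ioo] at hle
      simp only [nonpos_iff_eq_zero, ENNReal.ofReal_eq_zero] at hle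
      linarith
    have hzero' : Set.EqOn P 0 Set.univ :=
      hP.eqOn_zero_of_preconnected_of_frequently_eq_zero isPreconnected_univ
        (Set.mem_univ _) hfreq
    obtain ⟨y, hy⟩ := hPne
    exact hy (hzero' (Set.mem_univ y))
  -- c₁ is always negative
  have hneg : ∀ x : ℝ, c₁ x < 0 := by
    intro x; rw [hc₁ x]; simpa using hpos x
  have h0notin : 0 ∉ c₁ '' {x : ℝ | P x = 0} := by
    rintro ⟨x, _, hx⟩
    exact absurd hx (ne_of_lt (hneg x))
  -- build a sequence of zeros going to -∞
  rw [not_bddBelow_iff] at hzero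
  choose u hu1 hu2 using fun n : ℕ => hzero (-(n : ℝ))
  have hu_tendsto : Tendsto u atTop atBot := by
    apply tendsto_atBot_mono (fun n => (hu2 n).le)
    exact tendsto_neg_atBot_iff.mpr tendsto_natCast_atTop_atTop
  -- integrals over Iic (u n) tend to 0
  have hlim : Tendsto (fun n => ∫ t in Set.Iic (u n), f t) atTop (nhds 0) := by
    have : ∀ n, ∫ t in Set.Iic (u n), f t = ∫ t, (Set.Iic (u n)).indicator f t := by
      intro n; rw [integral_indicator measurableSet_Iic]
    simp_rw [this]
    have h0 : (0 : ℝ) = ∫ t : ℝ, (0 : ℝ) := by simp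
    rw [h0]
    apply tendsto_integral_of_dominated_convergence (fun t => |f t|)
    · intro n
      exact (hInt.indicator measurableSet_Iic).aestronglyMeasurable
    · exact hInt.abs
    · intro n
      refine Filter.Eventually.of_forall fun t => ?_
      rw [Real.norm_eq_abs]
      by_cases ht : t ∈ Set.Iic (u n)
      · rw [Set.indicator_of_mem ht]
      · rw [Set.indicator_of_notMem ht]; simp [abs_nonneg]
    · refine Filter.Eventually.of_forall fun t => ?_
      have : ∀ᶠ n in atTop, (Set.Iic (u n)).indicator f t = 0 := by
        have ht : ∀ᶠ n in atTop, u n < t := hu_tendsto.eventually (eventually_lt_atBot t)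
        filter_upwards [ht] with n hn
        exact Set.indicator_of_notMem (by simpa using hn.not_ge) f
      exact Tendsto.congr' (this.mono fun n h => h.symm) tendsto_const_nhds
  have hclim : Tendsto (fun n => c₁ (u n)) atTop (nhds 0) := by
    have : (fun n => c₁ (u n)) = fun n => -∫ t in Set.Iic (u n), f t := by
      funext n; exact hc₁ (u n)
    rw [this]
    simpa using hlim.neg
  have hmem : (0 : ℝ) ∈ closure (c₁ '' {x : ℝ | P x = 0}) := by
    apply mem_closure_of_tendsto hclim
    exact Filter.Eventually.of_forall fun n => Set.mem_image_of_mem c₁ (hu1 n)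
  refine ⟨h0notin, hmem, fun hcl => h0notin (hcl.closure_subset hmem)⟩
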